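/- Let d ≥ 2 and let S be a d×d complex Hermitian matrix with S_{kk} = 1 for all k. For 0 ≤ t ≤ d−2 define: R(−t) ∈ M_d(ℂ) by R(−t)_{ij} = S_{t+i, t+j} if both i ≤ d−t and j ≤ d−t, and R(−t)_{ij} = δ_{ij} otherwise (1-based indices); F ∈ M_d(ℂ) the lower shift with F_{ij} = δ_{i, j+1}; G(−t) the d×2 matrix whose first column u has u_1 = 1, u_i = conj(S_{t+1, t+i}) for 2 ≤ i ≤ d−t, and u_i = 0 for i > d−t, and whose second column v has v_1 = 0 and v_i = u_i for i ≥ 2; and J = diag(1, −1). Then for every t with 0 ≤ t ≤ d−2: R(−t) − F · R(−t−1) · F* = G(−t) · J · G(−t)*. -/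

import Mathlib

open Matrix

/-- `R(−t)`: the top-left `(d−t)×(d−t)` block is the trailing principal submatrix of `S`
(1-based entries `S_{t+i,t+j}`), and the rest is the identity. -/
def dispR (d : ℕ) (S : Matrix (Fin d) (Fin d) ℂ) (t : ℕ) : Matrix (Fin d) (Fin d) ℂ :=
  fun i j =>
    if h : i.val + t < d ∧ j.val + t < d then S ⟨i.val + t, h.1⟩ ⟨j.val + t, h.2⟩
    else if i = j then 1 else 0

/-- The lower shift matrix `F`, with `F_{ij} = δ_{i,j+1}`. -/
def dispF (d : ℕ) : Matrix (Fin d) (Fin d) ℂ :=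
  fun i j => if i.val = j.val + 1 then 1 else 0

/-- The `d×2` generator matrix `G(−t)`: its first column `u` has `u_1 = 1`,
`u_i = conj S_{t+1, t+i}` for `2 ≤ i ≤ d−t` and `0` beyond, and the second column
agrees with the first except that its top entry is `0`. -/
def dispG (d : ℕ) (S : Matrix (Fin d) (Fin d) ℂ) (t : ℕ) : Matrix (Fin d) (Fin 2) ℂ :=
  fun i c =>
    if i.val = 0 then (if c = 0 then 1 else 0)
    else if h : t + i.val < d then
      star (S ⟨t, Nat.lt_of_le_of_lt (Nat.le_add_right t i.val) h⟩ ⟨t + i.val, h⟩)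
    else 0

/-- The signature matrix `J = diag(1, −1)`. -/
def dispJ : Matrix (Fin 2) (Fin 2) ℂ := !![1, 0; 0, -1]

lemma shiftL (d : ℕ) (M : Matrix (Fin d) (Fin d) ℂ) (i j : Fin d) :
    (dispF d * M) i j = if h : i.val ≠ 0 then M ⟨i.val - 1, by omega⟩ j else 0 := by
  rw [mul_apply]
  rcases eq_or_ne i.val 0 with h | h
  · simp only [dif_neg (not_not.mpr h)]
    apply Finset.sum_eq_zero
    intro k _
    simp [dispF, h]
  · rw [dif_pos h]
    rw [Finset.sum_eq_single (⟨i.val - 1, by omega⟩ : Fin d)]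
    · simp [dispF]; omega
    · intro k _ hk
      have hc : ¬ (i.val = k.val + 1) := fun hc => hk (Fin.ext (show k.val = i.val - 1 by omega))
      simp [dispF, hc]
    · intro hk; exact absurd (Finset.mem_univ _) hk

lemma shiftR (d : ℕ) (M : Matrix (Fin d) (Fin d) ℂ) (i j : Fin d) :
    (M * (dispF d)ᴴ) i j = if h : j.val ≠ 0 then M i ⟨j.val - 1, by omega⟩ else 0 := by
  rw [mul_apply]
  rcases eq_or_ne j.val 0 with h | h
  · simp only [dif_neg (not_not.mpr h)]
    apply Finset.sum_eq_zero
    intro k _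
    simp [dispF, conjTranspose_apply, h]
  · rw [dif_pos h]
    rw [Finset.sum_eq_single (⟨j.val - 1, by omega⟩ : Fin d)]
    · simp [dispF, conjTranspose_apply]; omega
    · intro k _ hk
      have hc : ¬ (j.val = k.val + 1) := fun hc => hk (Fin.ext (show k.val = j.val - 1 by omega))
      simp [dispF, conjTranspose_apply, hc]
    · intro hk; exact absurd (Finset.mem_univ _) hk

/-- the displacement-structure equation
`R(−t) − F R(−t−1) F* = G(−t) J G(−t)*` for a Hermitian matrix with unit diagonal. -/
theorem stmt_17 (d : ℕ) (hd : 2 ≤ d) (S : Matrix (Fin d) (Fin d) ℂ)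
    (hS : S.IsHermitian) (hdiag : ∀ k, S k k = 1)
    (t : ℕ) (ht : t ≤ d - 2) :
    dispR d S t - dispF d * dispR d S (t + 1) * (dispF d)ᴴ =
      dispG d S t * dispJ * (dispG d S t)ᴴ := by
  have hst : ∀ a b, star (S a b) = S b a := fun a b => by
    conv_rhs => rw [← hS]
    rfl
  ext i j
  rw [Matrix.sub_apply, shiftR, shiftL]
  have hrhs : (dispG d S t * dispJ * (dispG d S t)ᴴ) i j =
      dispG d S t i 0 * star (dispG d S t j 0) - dispG d S t i 1 * star (dispG d S t j 1) := by
    simp [mul_apply, Fin.sum_univ_two, dispJ, conjTranspose_apply]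
    ring
  rw [hrhs]
  rcases eq_or_ne i.val 0 with hi | hi <;> rcases eq_or_ne j.val 0 with hj | hj
  · -- i = 0, j = 0
    rw [dif_neg (not_not.mpr hj), sub_zero]
    simp only [dispR, dispG, hi, hj]
    rw [dif_pos ⟨by omega, by omega⟩, hdiag]
    norm_num
  · -- i = 0, j ≠ 0
    rw [dif_pos hj, dif_neg (not_not.mpr hi), sub_zero]
    simp only [dispR, dispG, hi, hj]
    by_cases h : t + j.val < d
    · rw [dif_pos ⟨by omega, by omega⟩, dif_pos h]
      norm_num
      congr 1 <;> apply Fin.ext <;> simp <;> omega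
    · rw [dif_neg (by omega), dif_neg h]
      have hne : i ≠ j := fun hc => hj (by rw [← hc]; exact hi)
      rw [if_neg hne]
      norm_num
  · -- i ≠ 0, j = 0
    rw [dif_neg (not_not.mpr hj), sub_zero]
    simp only [dispR, dispG, hi, hj]
    by_cases h : t + i.val < d
    · rw [dif_pos ⟨by omega, by omega⟩, dif_pos h]
      norm_num
      rw [← RCLike.star_def, hst]
      congr 1 <;> apply Fin.ext <;> simp <;> omega
    · rw [dif_neg (by omega), dif_neg h]
      have hne : i ≠ j := fun hc => hi (by rw [hc]; exact hj)
      rw [if_neg hne]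
      norm_num
  · -- i ≠ 0, j ≠ 0
    rw [dif_pos hj, dif_pos hi]
    have heq : (if h : i.val + t < d ∧ j.val + t < d then
        S ⟨i.val + t, h.1⟩ ⟨j.val + t, h.2⟩ else if i = j then 1 else 0) =
        dispR d S (t + 1) ⟨i.val - 1, by omega⟩ ⟨j.val - 1, by omega⟩ := by
      unfold dispR
      by_cases h : i.val + t < d ∧ j.val + t < d
      · rw [dif_pos h, dif_pos ⟨by simp; omega, by simp; omega⟩]
        congr 1 <;> apply Fin.ext <;> simp <;> omega
      · rw [dif_neg h, dif_neg (by simp; omega)]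
        congr 1
        simp only [eq_iff_iff, Fin.ext_iff]
        omega
    rw [show dispR d S t i j = (if h : i.val + t < d ∧ j.val + t < d then
        S ⟨i.val + t, h.1⟩ ⟨j.val + t, h.2⟩ else if i = j then 1 else 0) from rfl, heq, sub_self]
    simp only [dispG, if_neg hi, if_neg hj]
    by_cases h : t + i.val < d <;> by_cases h' : t + j.val < d <;>
      simp [h, h'] <;> ring
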